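/- arXiv:1707.03038 — 2 statements merged into one kernel-verified Lean document; each statement's English description precedes it below -/
import Mathlib

section
/- The functions |m_ε'| are bounded in the Lorentz space L^{2,1}(H) uniformly in ε: in fact ‖|m_ε'|‖_{L^{2,1}(H)} ≤ 8√π for all ε > 0, where the L^{2,1} norm is 2∫₀^∞ μ(t)^{1/2} dt with μ(t) the Lebesgue measure of {z ∈ H : |m_ε'(z)| > t}. -/
open Complex MeasureTheory

/-- The functions `|m_ε'|` are bounded in `L^{2,1}(H)` uniformly in `ε`:
`‖|m_ε'|‖_{L^{2,1}(H)} = 2∫₀^∞ μ(t)^{1/2} dt ≤ 8√π` for all `ε > 0`, where `μ(t)` is the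
Lebesgue measure of `{z ∈ H : |m_ε'(z)| > t}`. -/
theorem stmt_7 (ε : ℝ) (hε : 0 < ε) :
    2 * ∫ t in Set.Ioi (0 : ℝ),
        Real.sqrt ((volume {z : ℂ | 0 < z.im ∧
          t < ‖2 * Complex.I * (ε : ℂ) / (z + (ε : ℂ) * Complex.I) ^ 2‖}).toReal)
      ≤ 8 * Real.sqrt Real.pi := by
  set a : ℝ := 2 / ε with ha
  have ha0 : 0 < a := by positivity
  set f : ℝ → ℝ := fun t => Real.sqrt ((volume {z : ℂ | 0 < z.im ∧
      t < ‖2 * Complex.I * (ε : ℂ) / (z + (ε : ℂ) * Complex.I) ^ 2‖}).toReal) with hf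
  set g : ℝ → ℝ :=
    (Set.Ioc (0:ℝ) a).indicator (fun t => Real.sqrt (2 * Real.pi * ε) * t ^ (-(1/2) : ℝ)) with hg
  -- the modulus computation
  have hne : ∀ z : ℂ, 0 < z.im → z + (ε : ℂ) * Complex.I ≠ 0 := by
    intro z hz h
    have : (z + (ε : ℂ) * Complex.I).im = z.im + ε := by simp
    rw [h] at this
    simp at this
    linarith
  have habs : ∀ z : ℂ, 0 < z.im →
      ‖2 * Complex.I * (ε : ℂ) / (z + (ε : ℂ) * Complex.I) ^ 2‖
        = 2 * ε / ‖z + (ε : ℂ) * Complex.I‖ ^ 2 := by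
    intro z hz
    rw [norm_div, norm_mul, norm_mul, norm_pow]
    simp [abs_of_pos hε]
  -- pointwise bound
  have hbound : ∀ t ∈ Set.Ioi (0:ℝ), f t ≤ g t := by
    intro t ht
    simp only [Set.mem_Ioi] at ht
    by_cases hta : t ≤ a
    · -- the superlevel set is contained in a ball
      have hsub : {z : ℂ | 0 < z.im ∧
          t < ‖2 * Complex.I * (ε : ℂ) / (z + (ε : ℂ) * Complex.I) ^ 2‖}
          ⊆ Metric.ball (-(ε : ℂ) * Complex.I) (Real.sqrt (2 * ε / t)) := by
        intro z hz
        obtain ⟨hzim, hzt⟩ := hz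
        rw [habs z hzim] at hzt
        have hc : 0 < ‖z + (ε : ℂ) * Complex.I‖ := by
          exact norm_pos_iff.mpr (hne z hzim)
        have hlt : ‖z + (ε : ℂ) * Complex.I‖ ^ 2 < 2 * ε / t := by
          rw [lt_div_iff₀ ht]
          rw [lt_div_iff₀ (by positivity)] at hzt
          linarith
        have : ‖z + (ε : ℂ) * Complex.I‖ < Real.sqrt (2 * ε / t) :=
          (Real.lt_sqrt hc.le).mpr hlt
        simpa [Metric.mem_ball, Complex.dist_eq, sub_neg_eq_add, sub_eq_add_neg,
          neg_mul, ← sub_eq_add_neg] using this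
      have hvol : (volume {z : ℂ | 0 < z.im ∧
          t < ‖2 * Complex.I * (ε : ℂ) / (z + (ε : ℂ) * Complex.I) ^ 2‖}).toReal
          ≤ 2 * Real.pi * ε / t := by
        have h1 := measure_mono (μ := volume) hsub
        have h2 : volume (Metric.ball (-(ε : ℂ) * Complex.I) (Real.sqrt (2 * ε / t)))
            = ENNReal.ofReal (2 * Real.pi * ε / t) := by
          rw [Complex.volume_ball, ← ENNReal.ofReal_pow (Real.sqrt_nonneg _),
            Real.sq_sqrt (by positivity), ← ENNReal.ofReal_coe_nnreal, NNReal.coe_real_pi,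
            ← ENNReal.ofReal_mul (by positivity)]
          ring_nf
        rw [h2] at h1
        calc (volume _).toReal ≤ (ENNReal.ofReal (2 * Real.pi * ε / t)).toReal :=
              ENNReal.toReal_mono ENNReal.ofReal_ne_top h1
          _ = 2 * Real.pi * ε / t := ENNReal.toReal_ofReal (by positivity)
      have hgt : g t = Real.sqrt (2 * Real.pi * ε) * t ^ (-(1/2) : ℝ) := by
        rw [hg, Set.indicator_of_mem (Set.mem_Ioc.mpr ⟨ht, hta⟩)]
      rw [hgt]
      calc f t ≤ Real.sqrt (2 * Real.pi * ε / t) := Real.sqrt_le_sqrt hvol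
        _ = Real.sqrt (2 * Real.pi * ε) * t ^ (-(1/2) : ℝ) := by
            rw [div_eq_mul_inv, Real.sqrt_mul (by positivity)]
            congr 1
            rw [Real.sqrt_inv, Real.rpow_neg ht.le, ← Real.sqrt_eq_rpow]
    · -- the superlevel set is empty
      push_neg at hta
      have hempty : {z : ℂ | 0 < z.im ∧
          t < ‖2 * Complex.I * (ε : ℂ) / (z + (ε : ℂ) * Complex.I) ^ 2‖} = ∅ := by
        ext z
        simp only [Set.mem_setOf_eq, Set.mem_empty_iff_false, iff_false, not_and, not_lt]
        intro hzim
        rw [habs z hzim]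
        have him : ε < ‖z + (ε : ℂ) * Complex.I‖ := by
          have h1 : (z + (ε : ℂ) * Complex.I).im = z.im + ε := by simp
          have h2 := Complex.abs_im_le_norm (z + (ε : ℂ) * Complex.I)
          rw [h1] at h2
          have : z.im + ε ≤ |z.im + ε| := le_abs_self _
          linarith
        have : 2 * ε / ‖z + (ε : ℂ) * Complex.I‖ ^ 2 < 2 / ε := by
          rw [div_lt_div_iff₀ (pow_pos (hε.trans him) 2) hε]
          have : ε ^ 2 < ‖z + (ε : ℂ) * Complex.I‖ ^ 2 := by nlinarith
          nlinarith
        rw [← ha] at this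
        linarith
      have hgt : g t = 0 := by
        rw [hg, Set.indicator_of_notMem (by simp [Set.mem_Ioc]; intro _; linarith)]
      rw [hgt]
      simp only [hf, hempty, measure_empty, ENNReal.toReal_zero, Real.sqrt_zero, le_refl]
  -- integrability of g
  have hint : IntegrableOn (fun t : ℝ => Real.sqrt (2 * Real.pi * ε) * t ^ (-(1/2) : ℝ))
      (Set.Ioc 0 a) volume := by
    have := (intervalIntegral.intervalIntegrable_rpow' (a := 0) (b := a)
      (r := -(1/2)) (by norm_num)).const_mul (Real.sqrt (2 * Real.pi * ε))
    rwa [intervalIntegrable_iff_integrableOn_Ioc_of_le ha0.le] at this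
  have hgint : Integrable g (volume.restrict (Set.Ioi (0:ℝ))) := by
    rw [hg]
    exact (hint.integrable_indicator measurableSet_Ioc).restrict
  -- main estimate
  have hmain : ∫ t in Set.Ioi (0:ℝ), f t ≤ ∫ t in Set.Ioi (0:ℝ), g t := by
    refine integral_mono_of_nonneg ?_ hgint ?_
    · exact Filter.Eventually.of_forall fun t => Real.sqrt_nonneg _
    · exact (ae_restrict_iff' measurableSet_Ioi).mpr (Filter.Eventually.of_forall hbound)
  -- compute ∫ g
  have hgval : ∫ t in Set.Ioi (0:ℝ), g t
      = Real.sqrt (2 * Real.pi * ε) * (2 * Real.sqrt a) := by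
    rw [hg, integral_indicator measurableSet_Ioc, Measure.restrict_restrict measurableSet_Ioc,
      Set.inter_eq_left.mpr Set.Ioc_subset_Ioi_self,
      ← intervalIntegral.integral_of_le ha0.le,
      intervalIntegral.integral_const_mul,
      integral_rpow (Or.inl (by norm_num))]
    have h1 : (-(1/2:ℝ)+1) = 1/2 := by norm_num
    rw [h1, Real.zero_rpow (by norm_num : (1/2:ℝ) ≠ 0), Real.sqrt_eq_rpow a]
    ring
  -- final arithmetic
  have hkey : Real.sqrt (2 * Real.pi * ε) * Real.sqrt a = 2 * Real.sqrt Real.pi := by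
    rw [← Real.sqrt_mul (by positivity)]
    have : 2 * Real.pi * ε * a = 4 * Real.pi := by
      rw [ha]; field_simp; ring
    rw [this, show (4:ℝ) * Real.pi = 2^2 * Real.pi by norm_num,
      Real.sqrt_mul (by positivity), Real.sqrt_sq (by norm_num)]
  calc 2 * ∫ t in Set.Ioi (0:ℝ), f t ≤ 2 * ∫ t in Set.Ioi (0:ℝ), g t := by linarith
    _ = 8 * Real.sqrt Real.pi := by rw [hgval]; nlinarith [hkey]
end

section
/- Let E₁ ⊆ E₂ and F₁ ⊆ F₂ be Banach spaces with continuous embeddings, F₁ a Hilbert space, and A : E₂ → F₂ continuous linear. Suppose there is a sequence (x_n) with x_n ∈ E₁, ‖x_n‖_{E₁} ≤ 1, Ax_n ∈ F₁, limsup ‖Ax_n‖_{F₁} = ∞, and each functional f ↦ ⟨Ax_n, f⟩_{F₁} extends continuously to F₂. Then there exists a single x ∈ E₁ such that Ax ∉ F₁, in the sense that there exist ℓ_n ∈ F₂* with ‖ℓ_n‖_{F₁*} ≤ 1 but ℓ_n(Ax) → ∞. -/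
open Filter

section Aux

variable {E₁ E₂ F₁ F₂ : Type*}
  [NormedAddCommGroup E₁] [NormedSpace ℝ E₁] [CompleteSpace E₁]
  [NormedAddCommGroup E₂] [NormedSpace ℝ E₂] [CompleteSpace E₂]
  [NormedAddCommGroup F₁] [InnerProductSpace ℝ F₁] [CompleteSpace F₁]
  [NormedAddCommGroup F₂] [NormedSpace ℝ F₂] [CompleteSpace F₂]

/-- The invariant for the inductive construction: `p = (z, v, ℓ)` with `‖z‖ ≤ 1`,
`A (j z) = i v`, `‖v‖ ≥ 4^k`, `ℓ` extends `⟨v, ·⟩`, and `v ⊥ vₘ` for `m < k`. -/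
def good (j : E₁ →L[ℝ] E₂) (i : F₁ →L[ℝ] F₂) (A : E₂ →L[ℝ] F₂) (k : ℕ)
    (prev : ℕ → E₁ × F₁ × (F₂ →L[ℝ] ℝ)) (p : E₁ × F₁ × (F₂ →L[ℝ] ℝ)) : Prop :=
  ‖p.1‖ ≤ 1 ∧ A (j p.1) = i p.2.1 ∧ (4:ℝ)^k ≤ ‖p.2.1‖ ∧
    (∀ f : F₁, p.2.2 (i f) = inner ℝ p.2.1 f) ∧
    (∀ m, m < k → inner ℝ p.2.1 (prev m).2.1 = (0:ℝ))

lemma good_congr {j : E₁ →L[ℝ] E₂} {i : F₁ →L[ℝ] F₂} {A : E₂ →L[ℝ] F₂} {k : ℕ}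
    {prev prev' : ℕ → E₁ × F₁ × (F₂ →L[ℝ] ℝ)} {p} (h : ∀ m, m < k → prev m = prev' m) :
    good j i A k prev p ↔ good j i A k prev' p := by
  unfold good
  constructor <;> rintro ⟨h1, h2, h3, h4, h5⟩ <;> refine ⟨h1, h2, h3, h4, fun m hm => ?_⟩
  · rw [← h m hm]; exact h5 m hm
  · rw [h m hm]; exact h5 m hm

lemma step_exists (j : E₁ →L[ℝ] E₂) (i : F₁ →L[ℝ] F₂) (A : E₂ →L[ℝ] F₂)
    (x : ℕ → E₁) (y : ℕ → F₁)
    (hx : ∀ n, ‖x n‖ ≤ 1)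
    (hAx : ∀ n, A (j (x n)) = i (y n))
    (hblow : ¬ BddAbove (Set.range fun n => ‖y n‖))
    (hext : ∀ n, ∃ L : F₂ →L[ℝ] ℝ, ∀ f : F₁, L (i f) = inner ℝ (y n) f)
    (k : ℕ) (prev : ℕ → E₁ × F₁ × (F₂ →L[ℝ] ℝ)) :
    ∃ p, (∀ m, m < k → good j i A m prev (prev m)) → good j i A k prev p := by
  classical
  by_cases hgood : ∀ m, m < k → good j i A m prev (prev m)
  swap
  · exact ⟨0, fun h => absurd h hgood⟩
  have hz1 : ∀ m, m < k → ‖(prev m).1‖ ≤ 1 := fun m hm => (hgood m hm).1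
  have hAz : ∀ m, m < k → A (j (prev m).1) = i (prev m).2.1 := fun m hm => (hgood m hm).2.1
  have hv4 : ∀ m, m < k → (4:ℝ)^m ≤ ‖(prev m).2.1‖ := fun m hm => (hgood m hm).2.2.1
  have hL : ∀ m, m < k → ∀ f : F₁, (prev m).2.2 (i f) = inner ℝ (prev m).2.1 f :=
    fun m hm => (hgood m hm).2.2.2.1
  have horth : ∀ m, m < k → ∀ l, l < m → inner ℝ (prev m).2.1 (prev l).2.1 = (0:ℝ) :=
    fun m hm => (hgood m hm).2.2.2.2
  have hvpos : ∀ m, m < k → 0 < ‖(prev m).2.1‖ := fun m hm =>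
    lt_of_lt_of_le (by positivity) (hv4 m hm)
  have horth' : ∀ m, m < k → ∀ l, l < k → l ≠ m → inner ℝ (prev l).2.1 (prev m).2.1 = (0:ℝ) := by
    intro m hm l hl hlm
    rcases lt_or_gt_of_ne hlm with h | h
    · rw [real_inner_comm]; exact horth m hm l h
    · exact horth l hl m h
  set C : ℕ → ℝ := fun m => ‖(prev m).2.2‖ * (‖A‖ * ‖j‖) with hCdef
  have hCnn : ∀ m, 0 ≤ C m := fun m => by positivity
  have hC : ∀ m, m < k → ∀ n, |(inner ℝ (prev m).2.1 (y n) : ℝ)| ≤ C m := by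
    intro m hm n
    rw [← hL m hm (y n), ← hAx n]
    calc |(prev m).2.2 (A (j (x n)))| ≤ ‖(prev m).2.2‖ * ‖A (j (x n))‖ :=
          (prev m).2.2.le_opNorm _
      _ ≤ ‖(prev m).2.2‖ * (‖A‖ * (‖j‖ * ‖x n‖)) := by
          gcongr
          calc ‖A (j (x n))‖ ≤ ‖A‖ * ‖j (x n)‖ := A.le_opNorm _
            _ ≤ ‖A‖ * (‖j‖ * ‖x n‖) := by gcongr; exact j.le_opNorm _
      _ ≤ ‖(prev m).2.2‖ * (‖A‖ * (‖j‖ * 1)) := by gcongr; exact hx n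
      _ = C m := by rw [hCdef]; ring
  set M : ℝ := 1 + ∑ m ∈ Finset.range k, C m / ‖(prev m).2.1‖^2 with hMdef
  have hM1 : 1 ≤ M := by
    rw [hMdef]
    have : 0 ≤ ∑ m ∈ Finset.range k, C m / ‖(prev m).2.1‖^2 :=
      Finset.sum_nonneg fun m _ => by positivity
    linarith
  have hMpos : 0 < M := lt_of_lt_of_le one_pos hM1
  set B : ℝ := ∑ m ∈ Finset.range k, C m / ‖(prev m).2.1‖ with hBdef
  obtain ⟨n, hn⟩ : ∃ n, M * 4^k + B < ‖y n‖ := by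
    rw [not_bddAbove_iff] at hblow
    obtain ⟨_, ⟨n, rfl⟩, h⟩ := hblow (M * 4^k + B)
    exact ⟨n, h⟩
  obtain ⟨L', hL'⟩ := hext n
  set c : ℕ → ℝ := fun m => (inner ℝ (prev m).2.1 (y n) : ℝ) / ‖(prev m).2.1‖^2 with hcdef
  have habs : ∀ m, m < k → |c m| ≤ C m / ‖(prev m).2.1‖^2 := by
    intro m hm
    rw [hcdef]
    rw [abs_div, abs_of_nonneg (by positivity : (0:ℝ) ≤ ‖(prev m).2.1‖^2)]
    gcongr
    exact hC m hm n
  refine ⟨(M⁻¹ • (x n - ∑ m ∈ Finset.range k, c m • (prev m).1),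
           M⁻¹ • (y n - ∑ m ∈ Finset.range k, c m • (prev m).2.1),
           M⁻¹ • (L' - ∑ m ∈ Finset.range k, c m • (prev m).2.2)), fun _ => ?_⟩
  have hsv : ‖∑ m ∈ Finset.range k, c m • (prev m).2.1‖ ≤ B := by
    calc ‖∑ m ∈ Finset.range k, c m • (prev m).2.1‖
        ≤ ∑ m ∈ Finset.range k, ‖c m • (prev m).2.1‖ := norm_sum_le _ _
      _ ≤ B := by
          rw [hBdef]
          apply Finset.sum_le_sum
          intro m hm
          have hm' := Finset.mem_range.mp hm
          rw [norm_smul, Real.norm_eq_abs]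
          calc |c m| * ‖(prev m).2.1‖ ≤ C m / ‖(prev m).2.1‖^2 * ‖(prev m).2.1‖ := by
                gcongr; exact habs m hm'
            _ = C m / ‖(prev m).2.1‖ := by
                rw [sq, div_mul_eq_div_div]
                exact div_mul_cancel₀ _ (ne_of_gt (hvpos m hm'))
  refine ⟨?_, ?_, ?_, ?_, ?_⟩
  · -- norm bound
    show ‖M⁻¹ • (x n - ∑ m ∈ Finset.range k, c m • (prev m).1)‖ ≤ 1
    rw [norm_smul, Real.norm_eq_abs, abs_of_pos (inv_pos.mpr hMpos)]
    have hbound : ‖x n - ∑ m ∈ Finset.range k, c m • (prev m).1‖ ≤ M := by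
      calc ‖x n - ∑ m ∈ Finset.range k, c m • (prev m).1‖
          ≤ ‖x n‖ + ‖∑ m ∈ Finset.range k, c m • (prev m).1‖ := norm_sub_le _ _
        _ ≤ 1 + ∑ m ∈ Finset.range k, C m / ‖(prev m).2.1‖^2 := by
            gcongr
            · exact hx n
            · calc ‖∑ m ∈ Finset.range k, c m • (prev m).1‖
                  ≤ ∑ m ∈ Finset.range k, ‖c m • (prev m).1‖ := norm_sum_le _ _
                _ ≤ ∑ m ∈ Finset.range k, C m / ‖(prev m).2.1‖^2 := by
                    apply Finset.sum_le_sum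
                    intro m hm
                    have hm' := Finset.mem_range.mp hm
                    rw [norm_smul, Real.norm_eq_abs]
                    calc |c m| * ‖(prev m).1‖ ≤ (C m / ‖(prev m).2.1‖^2) * 1 := by
                          apply mul_le_mul (habs m hm') (hz1 m hm') (norm_nonneg _)
                          positivity
                      _ = C m / ‖(prev m).2.1‖^2 := mul_one _
        _ = M := hMdef.symm
    calc M⁻¹ * ‖x n - ∑ m ∈ Finset.range k, c m • (prev m).1‖ ≤ M⁻¹ * M := by
          gcongr
      _ = 1 := inv_mul_cancel₀ (ne_of_gt hMpos)
  · -- A (j z) = i v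
    show A (j (M⁻¹ • (x n - ∑ m ∈ Finset.range k, c m • (prev m).1)))
        = i (M⁻¹ • (y n - ∑ m ∈ Finset.range k, c m • (prev m).2.1))
    simp only [map_smul, map_sub, map_sum]
    rw [hAx n]
    congr 2
    exact Finset.sum_congr rfl fun m hm => by
      rw [hAz m (Finset.mem_range.mp hm)]
  · -- norm lower bound
    show (4:ℝ)^k ≤ ‖M⁻¹ • (y n - ∑ m ∈ Finset.range k, c m • (prev m).2.1)‖
    rw [norm_smul, Real.norm_eq_abs, abs_of_pos (inv_pos.mpr hMpos)]
    have h1 : M * 4^k ≤ ‖y n - ∑ m ∈ Finset.range k, c m • (prev m).2.1‖ := by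
      have h2 : ‖y n‖ - ‖∑ m ∈ Finset.range k, c m • (prev m).2.1‖
          ≤ ‖y n - ∑ m ∈ Finset.range k, c m • (prev m).2.1‖ :=
        norm_sub_norm_le _ _
      have : M * 4^k ≤ ‖y n‖ - B := by linarith
      linarith
    calc (4:ℝ)^k = M⁻¹ * (M * 4^k) := by
          rw [← mul_assoc, inv_mul_cancel₀ (ne_of_gt hMpos), one_mul]
      _ ≤ M⁻¹ * ‖y n - ∑ m ∈ Finset.range k, c m • (prev m).2.1‖ := by gcongr
  · -- extension property
    intro f
    show (M⁻¹ • (L' - ∑ m ∈ Finset.range k, c m • (prev m).2.2)) (i f)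
        = inner ℝ (M⁻¹ • (y n - ∑ m ∈ Finset.range k, c m • (prev m).2.1)) f
    rw [real_inner_smul_left, inner_sub_left, sum_inner]
    simp only [ContinuousLinearMap.smul_apply, ContinuousLinearMap.sub_apply,
      ContinuousLinearMap.coe_sum', Finset.sum_apply, ContinuousLinearMap.coe_smul',
      Pi.smul_apply, smul_eq_mul]
    rw [hL' f]
    congr 2
    refine Finset.sum_congr rfl fun m hm => ?_
    rw [real_inner_smul_left, hL m (Finset.mem_range.mp hm) f]
  · -- orthogonality
    intro m hm
    show (inner ℝ (M⁻¹ • (y n - ∑ l ∈ Finset.range k, c l • (prev l).2.1)) (prev m).2.1 : ℝ) = 0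
    rw [real_inner_smul_left, inner_sub_left, sum_inner]
    have hsum : (∑ l ∈ Finset.range k, (inner ℝ (c l • (prev l).2.1) (prev m).2.1 : ℝ))
        = inner ℝ (y n) (prev m).2.1 := by
      rw [Finset.sum_eq_single_of_mem m (Finset.mem_range.mpr hm)]
      · rw [real_inner_smul_left, real_inner_self_eq_norm_sq, hcdef]
        rw [div_mul_cancel₀ _ (pow_ne_zero 2 (hvpos m hm).ne')]
        exact real_inner_comm _ _
      · intro l hl hlm
        rw [real_inner_smul_left, horth' m hm l (Finset.mem_range.mp hl) hlm, mul_zero]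
    rw [hsum, sub_self, mul_zero]

noncomputable def bseq (j : E₁ →L[ℝ] E₂) (i : F₁ →L[ℝ] F₂) (A : E₂ →L[ℝ] F₂)
    (x : ℕ → E₁) (y : ℕ → F₁)
    (hx : ∀ n, ‖x n‖ ≤ 1)
    (hAx : ∀ n, A (j (x n)) = i (y n))
    (hblow : ¬ BddAbove (Set.range fun n => ‖y n‖))
    (hext : ∀ n, ∃ L : F₂ →L[ℝ] ℝ, ∀ f : F₁, L (i f) = inner ℝ (y n) f)
    (k : ℕ) : E₁ × F₁ × (F₂ →L[ℝ] ℝ) :=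
  (step_exists j i A x y hx hAx hblow hext k
    (fun m => if h : m < k then bseq j i A x y hx hAx hblow hext m else 0)).choose
termination_by k
decreasing_by all_goals assumption

lemma seq_good (j : E₁ →L[ℝ] E₂) (i : F₁ →L[ℝ] F₂) (A : E₂ →L[ℝ] F₂)
    (x : ℕ → E₁) (y : ℕ → F₁)
    (hx : ∀ n, ‖x n‖ ≤ 1)
    (hAx : ∀ n, A (j (x n)) = i (y n))
    (hblow : ¬ BddAbove (Set.range fun n => ‖y n‖))
    (hext : ∀ n, ∃ L : F₂ →L[ℝ] ℝ, ∀ f : F₁, L (i f) = inner ℝ (y n) f)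
    (k : ℕ) :
    good j i A k (fun m => bseq j i A x y hx hAx hblow hext m)
      (bseq j i A x y hx hAx hblow hext k) := by
  induction k using Nat.strong_induction_on with
  | _ k ih =>
    have heq : ∀ m, m < k →
        (fun m => if h : m < k then bseq j i A x y hx hAx hblow hext m else 0) m
          = (fun m => bseq j i A x y hx hAx hblow hext m) m := by
      intro m hm; simp [hm]
    rw [good_congr (fun m hm => (heq m hm).symm)]
    rw [bseq]
    refine (step_exists j i A x y hx hAx hblow hext k _).choose_spec ?_
    intro m hm
    rw [dif_pos hm]
    exact (good_congr (fun l hl => (heq l (hl.trans hm)))).mpr (ih m hm)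

end Aux

/-- let `E₁ ⊆ E₂`, `F₁ ⊆ F₂` be Banach spaces with continuous embeddings
`j : E₁ ↪ E₂`, `i : F₁ ↪ F₂`, `F₁` a Hilbert space, `A : E₂ → F₂` continuous linear.
If there is a sequence `xₙ ∈ E₁` with `‖xₙ‖_{E₁} ≤ 1`, `A xₙ ∈ F₁` (say `A xₙ = i yₙ`),
`limsup ‖yₙ‖_{F₁} = ∞`, and each `f ↦ ⟨yₙ, f⟩_{F₁}` extends continuously to `F₂`, then
there is `x ∈ E₁` with `Ax ∉ F₁`, in the sense that there are `ℓₙ ∈ F₂*` with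
`‖ℓₙ‖_{F₁*} ≤ 1` but `ℓₙ(Ax) → ∞`. -/
theorem stmt_17
    (E₁ E₂ F₁ F₂ : Type*)
    [NormedAddCommGroup E₁] [NormedSpace ℝ E₁] [CompleteSpace E₁]
    [NormedAddCommGroup E₂] [NormedSpace ℝ E₂] [CompleteSpace E₂]
    [NormedAddCommGroup F₁] [InnerProductSpace ℝ F₁] [CompleteSpace F₁]
    [NormedAddCommGroup F₂] [NormedSpace ℝ F₂] [CompleteSpace F₂]
    (j : E₁ →L[ℝ] E₂) (hj : Function.Injective j)
    (i : F₁ →L[ℝ] F₂) (hi : Function.Injective i)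
    (A : E₂ →L[ℝ] F₂)
    (x : ℕ → E₁) (y : ℕ → F₁)
    (hx : ∀ n, ‖x n‖ ≤ 1)
    (hAx : ∀ n, A (j (x n)) = i (y n))
    (hblow : ¬ BddAbove (Set.range fun n => ‖y n‖))
    (hext : ∀ n, ∃ L : F₂ →L[ℝ] ℝ, ∀ f : F₁, L (i f) = inner ℝ (y n) f) :
    ∃ x' : E₁, ∃ ℓ : ℕ → F₂ →L[ℝ] ℝ,
      (∀ n, ∀ f : F₁, |ℓ n (i f)| ≤ ‖f‖)
      ∧ Tendsto (fun n => ℓ n (A (j x'))) atTop atTop := by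
  classical
  set P : ℕ → E₁ × F₁ × (F₂ →L[ℝ] ℝ) := bseq j i A x y hx hAx hblow hext with hPdef
  have hg : ∀ k, good j i A k P (P k) := fun k => seq_good j i A x y hx hAx hblow hext k
  have hz1 : ∀ k, ‖(P k).1‖ ≤ 1 := fun k => (hg k).1
  have hAz : ∀ k, A (j (P k).1) = i (P k).2.1 := fun k => (hg k).2.1
  have hv4 : ∀ k, (4:ℝ)^k ≤ ‖(P k).2.1‖ := fun k => (hg k).2.2.1
  have hLk : ∀ k, ∀ f : F₁, (P k).2.2 (i f) = inner ℝ (P k).2.1 f := fun k => (hg k).2.2.2.1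
  have horth : ∀ k, ∀ m, m < k → inner ℝ (P k).2.1 (P m).2.1 = (0:ℝ) := fun k => (hg k).2.2.2.2
  have hvpos : ∀ k, 0 < ‖(P k).2.1‖ := fun k => lt_of_lt_of_le (by positivity) (hv4 k)
  have horth' : ∀ k m, m ≠ k → inner ℝ (P k).2.1 (P m).2.1 = (0:ℝ) := by
    intro k m hmk
    rcases lt_or_gt_of_ne hmk with h | h
    · exact horth k m h
    · rw [real_inner_comm]; exact horth m k h
  -- the series
  have hsum : Summable (fun k => (2:ℝ)⁻¹^k • (P k).1) := by
    apply Summable.of_norm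
    apply Summable.of_nonneg_of_le (fun k => norm_nonneg _) (fun k => ?_)
      (summable_geometric_of_lt_one (by norm_num) (by norm_num) :
        Summable fun k => (2:ℝ)⁻¹^k)
    rw [norm_smul, Real.norm_eq_abs, abs_pow, abs_of_pos (by norm_num : (0:ℝ) < 2⁻¹)]
    calc (2:ℝ)⁻¹^k * ‖(P k).1‖ ≤ (2:ℝ)⁻¹^k * 1 := by
          gcongr; exact hz1 k
      _ = (2:ℝ)⁻¹^k := mul_one _
  set x' : E₁ := ∑' k, (2:ℝ)⁻¹^k • (P k).1 with hx'def
  refine ⟨x', fun k => ‖(P k).2.1‖⁻¹ • (P k).2.2, fun k f => ?_, ?_⟩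
  · -- norm bound of functionals on i(F₁)
    rw [ContinuousLinearMap.smul_apply, smul_eq_mul, hLk k f, abs_mul,
      abs_of_pos (inv_pos.mpr (hvpos k))]
    calc ‖(P k).2.1‖⁻¹ * |(inner ℝ (P k).2.1 f : ℝ)|
        ≤ ‖(P k).2.1‖⁻¹ * (‖(P k).2.1‖ * ‖f‖) := by
          gcongr; exact abs_real_inner_le_norm _ _
      _ = ‖f‖ := inv_mul_cancel_left₀ (hvpos k).ne' _
  · -- divergence
    have key : ∀ k, (P k).2.2 (A (j x')) = (2:ℝ)⁻¹^k * ‖(P k).2.1‖^2 := by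
      intro k
      set T : E₁ →L[ℝ] ℝ := ((P k).2.2).comp (A.comp j) with hTdef
      have h1 : (P k).2.2 (A (j x')) = T x' := rfl
      rw [h1, hx'def, T.map_tsum hsum]
      have h2 : ∀ m, T ((2:ℝ)⁻¹^m • (P m).1) = (2:ℝ)⁻¹^m * (inner ℝ (P k).2.1 (P m).2.1 : ℝ) := by
        intro m
        rw [map_smul, smul_eq_mul]
        congr 1
        show (P k).2.2 (A (j (P m).1)) = _
        rw [hAz m, hLk k]
      calc (∑' m, T ((2:ℝ)⁻¹^m • (P m).1))
          = ∑' m, (2:ℝ)⁻¹^m * (inner ℝ (P k).2.1 (P m).2.1 : ℝ) := by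
            exact tsum_congr h2
        _ = (2:ℝ)⁻¹^k * (inner ℝ (P k).2.1 (P k).2.1 : ℝ) := by
            apply tsum_eq_single
            intro m hmk
            rw [horth' k m hmk, mul_zero]
        _ = (2:ℝ)⁻¹^k * ‖(P k).2.1‖^2 := by rw [real_inner_self_eq_norm_sq]
    have hlow : ∀ k, (2:ℝ)^k ≤ (‖(P k).2.1‖⁻¹ • (P k).2.2) (A (j x')) := by
      intro k
      rw [ContinuousLinearMap.smul_apply, smul_eq_mul, key k]
      have : ‖(P k).2.1‖⁻¹ * ((2:ℝ)⁻¹^k * ‖(P k).2.1‖^2) = (2:ℝ)⁻¹^k * ‖(P k).2.1‖ := by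
        rw [sq]
        field_simp
      rw [this]
      calc (2:ℝ)^k = (2:ℝ)⁻¹^k * 4^k := by
            rw [← mul_pow]; norm_num
        _ ≤ (2:ℝ)⁻¹^k * ‖(P k).2.1‖ := by gcongr; exact hv4 k
    exact tendsto_atTop_mono hlow (tendsto_pow_atTop_atTop_of_one_lt one_lt_two)
end
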